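/- Let 𝔥 ⊂ gl(4,R) be the Lie algebra from the linearized isotropy of the SDE symmetry pseudogroup, acting on T = R⁴ = Π₁ ⊕ Π₂ with Π₁ = ⟨∂_t, ∂_z⟩ and Π₂ = ⟨∂_x, ∂_y⟩, generated by Y₁,…,Y₆ as above. Then Π₂ is the unique proper nonzero 𝔥-invariant subspace of T; in particular there is no 𝔥-invariant complement to Π₂ and no 𝔥-invariant line or hyperplane other than those forced by Π₂ (namely, no invariant 1-dimensional or 3-dimensional subspace exists). -/

import Mathlib

open Matrix

-- Linear vector fields on ℝ⁴ with basis (∂_t,∂_x,∂_y,∂_z) (indices 0,1,2,3),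
-- identified with 4×4 matrices.
def Y1 : Matrix (Fin 4) (Fin 4) ℝ := !![1,0,0,0; 0,-1,0,0; 0,0,0,0; 0,0,0,0]
def Y2 : Matrix (Fin 4) (Fin 4) ℝ := !![0,0,0,1; 0,0,0,0; 0,-1,0,0; 0,0,0,0]
def Y3 : Matrix (Fin 4) (Fin 4) ℝ := !![0,0,0,0; 0,0,-1,0; 0,0,0,0; 1,0,0,0]
def Y4 : Matrix (Fin 4) (Fin 4) ℝ := !![0,0,0,0; 0,0,0,0; 0,0,-1,0; 0,0,0,1]
def Y5 : Matrix (Fin 4) (Fin 4) ℝ := !![0,0,0,0; 0,1,0,0; 0,0,1,0; 0,0,0,0]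
def Y6 : Matrix (Fin 4) (Fin 4) ℝ := !![0,0,0,0; 0,0,0,1; -1,0,0,0; 0,0,0,0]

/-- A subspace `W ⊆ ℝ⁴` is 𝔥-invariant if it is preserved by each generator of 𝔥. -/
def HInvariant (W : Submodule ℝ (Fin 4 → ℝ)) : Prop :=
  ∀ Y ∈ ({Y1, Y2, Y3, Y4, Y5, Y6} : Set (Matrix (Fin 4) (Fin 4) ℝ)),
    ∀ w ∈ W, Y.mulVec w ∈ W

/-- `Π₂ = ⟨∂_x, ∂_y⟩`. -/
def Pi2 : Submodule ℝ (Fin 4 → ℝ) :=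
  Submodule.span ℝ {Pi.single (1 : Fin 4) (1 : ℝ), Pi.single (2 : Fin 4) (1 : ℝ)}

/-! ### Auxiliary material -/

lemma single1_eq : Pi.single (1 : Fin 4) (1:ℝ) = ![0,1,0,0] := by
  funext i; fin_cases i <;> simp [Pi.single_apply]

lemma single2_eq : Pi.single (2 : Fin 4) (1:ℝ) = ![0,0,1,0] := by
  funext i; fin_cases i <;> simp [Pi.single_apply]

lemma Y1_mulVec (v : Fin 4 → ℝ) : Y1.mulVec v = ![v 0, -v 1, 0, 0] := by
  funext i; fin_cases i <;>
    simp [Y1, Matrix.mulVec, dotProduct, Fin.sum_univ_four, Matrix.vecHead, Matrix.vecTail]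

lemma Y2_mulVec (v : Fin 4 → ℝ) : Y2.mulVec v = ![v 3, 0, -v 1, 0] := by
  funext i; fin_cases i <;>
    simp [Y2, Matrix.mulVec, dotProduct, Fin.sum_univ_four, Matrix.vecHead, Matrix.vecTail]

lemma Y3_mulVec (v : Fin 4 → ℝ) : Y3.mulVec v = ![0, -v 2, 0, v 0] := by
  funext i; fin_cases i <;>
    simp [Y3, Matrix.mulVec, dotProduct, Fin.sum_univ_four, Matrix.vecHead, Matrix.vecTail]

lemma Y4_mulVec (v : Fin 4 → ℝ) : Y4.mulVec v = ![0, 0, -v 2, v 3] := by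
  funext i; fin_cases i <;>
    simp [Y4, Matrix.mulVec, dotProduct, Fin.sum_univ_four, Matrix.vecHead, Matrix.vecTail]

lemma Y5_mulVec (v : Fin 4 → ℝ) : Y5.mulVec v = ![0, v 1, v 2, 0] := by
  funext i; fin_cases i <;>
    simp [Y5, Matrix.mulVec, dotProduct, Fin.sum_univ_four, Matrix.vecHead, Matrix.vecTail]

lemma Y6_mulVec (v : Fin 4 → ℝ) : Y6.mulVec v = ![0, v 3, -v 0, 0] := by
  funext i; fin_cases i <;>
    simp [Y6, Matrix.mulVec, dotProduct, Fin.sum_univ_four, Matrix.vecHead, Matrix.vecTail]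

/-- The submodule `{v | v 0 = 0 ∧ v 3 = 0}`. -/
def K2 : Submodule ℝ (Fin 4 → ℝ) where
  carrier := {v | v 0 = 0 ∧ v 3 = 0}
  add_mem' := by
    rintro a b ⟨ha0, ha3⟩ ⟨hb0, hb3⟩
    exact ⟨by simp [Pi.add_apply, ha0, hb0], by simp [Pi.add_apply, ha3, hb3]⟩
  zero_mem' := ⟨rfl, rfl⟩
  smul_mem' := by
    rintro c a ⟨h0, h3⟩
    exact ⟨by simp [Pi.smul_apply, h0], by simp [Pi.smul_apply, h3]⟩

lemma mem_Pi2_iff (v : Fin 4 → ℝ) : v ∈ Pi2 ↔ v 0 = 0 ∧ v 3 = 0 := by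
  constructor
  · intro hv
    have h : Pi2 ≤ K2 := by
      rw [Pi2, Submodule.span_le]
      rintro w (rfl | rfl) <;>
        exact ⟨by simp [Pi.single_apply], by simp [Pi.single_apply]⟩
    exact h hv
  · rintro ⟨h0, h3⟩
    have hv : v = v 1 • (Pi.single (1 : Fin 4) (1:ℝ) : Fin 4 → ℝ) + v 2 • (Pi.single (2 : Fin 4) (1:ℝ) : Fin 4 → ℝ) := by
      funext i; fin_cases i <;>
        simp [Pi.single_apply, single1_eq, single2_eq, h0, h3]
    rw [hv]
    exact Submodule.add_mem _
      (Submodule.smul_mem _ _ (Submodule.subset_span (Set.mem_insert _ _)))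
      (Submodule.smul_mem _ _ (Submodule.subset_span (Set.mem_insert_of_mem _ rfl)))

lemma e1_mem_Pi2 : (![0,1,0,0] : Fin 4 → ℝ) ∈ Pi2 := by
  rw [mem_Pi2_iff]; constructor <;> simp

lemma Pi2_ne_top : Pi2 ≠ ⊤ := by
  intro h
  have : (![1,0,0,0] : Fin 4 → ℝ) ∈ Pi2 := h ▸ Submodule.mem_top
  rw [mem_Pi2_iff] at this
  norm_num at this

lemma Pi2_ne_bot : Pi2 ≠ ⊥ := by
  intro h
  have := e1_mem_Pi2
  rw [h, Submodule.mem_bot] at this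
  have := congrFun this 1
  norm_num at this

section Inv
variable {W : Submodule ℝ (Fin 4 → ℝ)}

lemma hY1 (hW : HInvariant W) : ∀ w ∈ W, Y1.mulVec w ∈ W := hW Y1 (by simp)
lemma hY2 (hW : HInvariant W) : ∀ w ∈ W, Y2.mulVec w ∈ W := hW Y2 (by simp)
lemma hY3 (hW : HInvariant W) : ∀ w ∈ W, Y3.mulVec w ∈ W := hW Y3 (by simp)
lemma hY4 (hW : HInvariant W) : ∀ w ∈ W, Y4.mulVec w ∈ W := hW Y4 (by simp)
lemma hY6 (hW : HInvariant W) : ∀ w ∈ W, Y6.mulVec w ∈ W := hW Y6 (by simp)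

/-- If an invariant subspace contains `e0`, it is everything. -/
lemma top_of_e0 (hW : HInvariant W) (h0 : (![1,0,0,0] : Fin 4 → ℝ) ∈ W) : W = ⊤ := by
  -- e3 = Y3 e0
  have h3 : (![0,0,0,1] : Fin 4 → ℝ) ∈ W := by
    have := hY3 hW _ h0
    rw [Y3_mulVec] at this
    simpa using this
  -- -e2 = Y6 e0
  have h2 : (![0,0,1,0] : Fin 4 → ℝ) ∈ W := by
    have h := hY6 hW _ h0
    rw [Y6_mulVec] at h
    have := W.smul_mem (-1 : ℝ) h
    convert this using 1
    funext i; fin_cases i <;> simp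
  -- -e1 = Y3 e2
  have h1 : (![0,1,0,0] : Fin 4 → ℝ) ∈ W := by
    have h := hY3 hW _ h2
    rw [Y3_mulVec] at h
    have := W.smul_mem (-1 : ℝ) h
    convert this using 1
    funext i; fin_cases i <;> simp
  rw [eq_top_iff]
  intro v _
  have hv : v = v 0 • ![1,0,0,0] + v 1 • ![0,1,0,0] + v 2 • ![0,0,1,0]
      + v 3 • ![(0:ℝ),0,0,1] := by
    funext i; fin_cases i <;> simp
  rw [hv]
  exact W.add_mem (W.add_mem (W.add_mem (W.smul_mem _ h0) (W.smul_mem _ h1))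
    (W.smul_mem _ h2)) (W.smul_mem _ h3)

/-- If an invariant subspace contains a vector with nonzero 0- or 3-coordinate,
it is everything. -/
lemma top_of_outside (hW : HInvariant W) {v : Fin 4 → ℝ} (hv : v ∈ W) (h : v 0 ≠ 0 ∨ v 3 ≠ 0) :
    W = ⊤ := by
  have he0 : (![1,0,0,0] : Fin 4 → ℝ) ∈ W := by
    rcases h with h | h
    · -- Y1 v + Y1 (Y1 v) = (2 v0, 0, 0, 0)
      have h1 := hY1 hW _ hv
      have h1' := hY1 hW _ h1
      rw [Y1_mulVec] at h1 h1'
      rw [Y1_mulVec] at h1'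
      have hsum := W.add_mem h1 h1'
      have := W.smul_mem ((2 * v 0)⁻¹ : ℝ) hsum
      convert this using 1
      funext i; fin_cases i <;> simp <;> field_simp <;> ring
    · -- Y4 v + Y4 (Y4 v) = (0,0,0, 2 v3), then Y2 of that
      have h4 := hY4 hW _ hv
      have h4' := hY4 hW _ h4
      rw [Y4_mulVec] at h4 h4'
      rw [Y4_mulVec] at h4'
      have hsum := W.add_mem h4 h4'
      have he3 : (![0,0,0,1] : Fin 4 → ℝ) ∈ W := by
        have := W.smul_mem ((2 * v 3)⁻¹ : ℝ) hsum
        convert this using 1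
        funext i; fin_cases i <;> simp <;> field_simp <;> ring
      have h2 := hY2 hW _ he3
      rw [Y2_mulVec] at h2
      convert h2 using 1
      funext i; fin_cases i <;> simp
  exact top_of_e0 hW he0

/-- If an invariant subspace contains a nonzero vector of `Π₂`, it contains `Π₂`. -/
lemma Pi2_le_of_inner (hW : HInvariant W) {v : Fin 4 → ℝ} (hv : v ∈ W) (h0 : v 0 = 0) (h3 : v 3 = 0)
    (hne : v ≠ 0) : Pi2 ≤ W := by
  have he1 : (![0,1,0,0] : Fin 4 → ℝ) ∈ W := by
    by_cases h1 : v 1 ≠ 0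
    · have h := hY1 hW _ hv
      rw [Y1_mulVec] at h
      have := W.smul_mem (-(v 1)⁻¹ : ℝ) h
      convert this using 1
      funext i; fin_cases i <;> simp [h0, h1]
    · push_neg at h1
      have h2 : v 2 ≠ 0 := by
        intro h2
        apply hne
        funext i; fin_cases i <;> simp [h0, h1, h2, h3]
      have h := hY3 hW _ hv
      rw [Y3_mulVec] at h
      have := W.smul_mem (-(v 2)⁻¹ : ℝ) h
      convert this using 1
      funext i; fin_cases i <;> simp [h0, h3, h2]
  have he2 : (![0,0,1,0] : Fin 4 → ℝ) ∈ W := by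
    have h := hY2 hW _ he1
    rw [Y2_mulVec] at h
    have := W.smul_mem (-1 : ℝ) h
    convert this using 1
    funext i; fin_cases i <;> simp
  rw [Pi2, Submodule.span_le]
  rintro w (rfl | rfl)
  · rw [single1_eq]; exact he1
  · rw [single2_eq]; exact he2

/-- Classification of invariant subspaces. -/
lemma classify (hW : HInvariant W) : W = ⊥ ∨ W = ⊤ ∨ W = Pi2 := by
  by_cases hle : W ≤ Pi2
  · by_cases hbot : W = ⊥
    · exact Or.inl hbot
    · right; right
      obtain ⟨v, hvW, hvne⟩ := Submodule.exists_mem_ne_zero_of_ne_bot hbot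
      have hvP := hle hvW
      rw [mem_Pi2_iff] at hvP
      exact le_antisymm hle (Pi2_le_of_inner hW hvW hvP.1 hvP.2 hvne)
  · right; left
    rw [SetLike.not_le_iff_exists] at hle
    obtain ⟨v, hvW, hvP⟩ := hle
    rw [mem_Pi2_iff, not_and_or] at hvP
    exact top_of_outside hW hvW (by tauto)

end Inv

lemma Pi2_invariant : HInvariant Pi2 := by
  intro Y hY w hw
  rw [mem_Pi2_iff] at hw ⊢
  rcases hY with rfl | rfl | rfl | rfl | rfl | rfl
  · rw [Y1_mulVec]; exact ⟨by simp [hw.1], by simp⟩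
  · rw [Y2_mulVec]; exact ⟨by simp [hw.2], by simp⟩
  · rw [Y3_mulVec]; exact ⟨by simp, by simp [hw.1]⟩
  · rw [Y4_mulVec]; exact ⟨by simp, by simp [hw.2]⟩
  · rw [Y5_mulVec]; exact ⟨by simp, by simp⟩
  · rw [Y6_mulVec]; exact ⟨by simp, by simp [hw.1]⟩

lemma finrank_Pi2 : Module.finrank ℝ Pi2 = 2 := by
  have hrange : Set.range ![(Pi.single (1 : Fin 4) (1:ℝ) : Fin 4 → ℝ), (Pi.single (2 : Fin 4) (1:ℝ) : Fin 4 → ℝ)]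
      = {(Pi.single (1 : Fin 4) (1:ℝ) : Fin 4 → ℝ), (Pi.single (2 : Fin 4) (1:ℝ) : Fin 4 → ℝ)} := by
    simp only [Matrix.range_cons, Matrix.range_empty, Set.union_empty, Set.union_singleton]
    exact Set.pair_comm _ _
  have hli : LinearIndependent ℝ ![(Pi.single (1 : Fin 4) (1:ℝ) : Fin 4 → ℝ), (Pi.single (2 : Fin 4) (1:ℝ) : Fin 4 → ℝ)] := by
    rw [LinearIndependent.pair_iff]
    intro s t h
    have h1 := congrFun h 1
    have h2 := congrFun h 2
    simp [single1_eq, single2_eq] at h1 h2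
    exact ⟨h1, h2⟩
  have := finrank_span_eq_card hli
  rw [hrange] at this
  rw [Pi2]
  simpa using this

theorem stmt_19 :
    -- Π₂ is invariant, and it is the only proper nonzero invariant subspace
    HInvariant Pi2 ∧
    (∀ W : Submodule ℝ (Fin 4 → ℝ), HInvariant W → W = ⊥ ∨ W = ⊤ ∨ W = Pi2) ∧
    -- in particular Π₂ has no invariant complement
    (¬ ∃ W : Submodule ℝ (Fin 4 → ℝ), HInvariant W ∧ IsCompl Pi2 W) ∧
    -- and there is no invariant line or hyperplane
    (¬ ∃ W : Submodule ℝ (Fin 4 → ℝ), HInvariant W ∧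
      (Module.finrank ℝ W = 1 ∨ Module.finrank ℝ W = 3)) := by
  refine ⟨Pi2_invariant, fun W hW => classify hW, ?_, ?_⟩
  · rintro ⟨W, hW, hc⟩
    rcases classify hW with rfl | rfl | rfl
    · have := hc.sup_eq_top
      rw [sup_bot_eq] at this
      exact Pi2_ne_top this
    · have := hc.inf_eq_bot
      rw [inf_top_eq] at this
      exact Pi2_ne_bot this
    · have := hc.inf_eq_bot
      rw [inf_idem] at this
      exact Pi2_ne_bot this
  · rintro ⟨W, hW, hr⟩
    rcases classify hW with rfl | rfl | rfl
    · simp [finrank_bot] at hr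
    · rw [finrank_top] at hr
      simp at hr
    · rw [finrank_Pi2] at hr
      norm_num at hr
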